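/- Fix t > 0 and define w(p) = |p·(t,t,0)|_G for p ∈ ℍ. Then |w(p) − w(q)| ≤ d_R(p,q) for all p, q ∈ ℍ, but there is no constant L > 0 such that |w(p) − w(q)| ≤ L·d_L(p,q) for all p, q ∈ ℍ. (Witness: for p₁ = (−t−ε, −t+ε, −εt) and p₂ = (−t,−t,0), one has w(p₁) − w(p₂) = (4ε⁴ + 64ε²t²)^{1/4} while d_L(p₁,p₂) = √2·ε.) -/

import Mathlib

noncomputable section

/-- The Heisenberg group as a set: `ℝ³` with coordinates `(x, y, z)`. -/
abbrev Heis : Type := ℝ × ℝ × ℝ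

/-- The Heisenberg group multiplication. -/
def Hmul (p q : Heis) : Heis :=
  (p.1 + q.1, p.2.1 + q.2.1, p.2.2 + q.2.2 + (p.1 * q.2.1 - q.1 * p.2.1) / 2)

/-- The Heisenberg group inverse. -/
def Hinv (p : Heis) : Heis := (-p.1, -p.2.1, -p.2.2)

/-- The Korányi gauge `|p|_G = ((x² + y²)² + 16 z²)^(1/4)`. -/
def kGauge (p : Heis) : ℝ := ((p.1 ^ 2 + p.2.1 ^ 2) ^ 2 + 16 * p.2.2 ^ 2) ^ ((1 : ℝ) / 4)

/-- The left-invariant gauge metric `d_L(p,q) = |p⁻¹·q|_G`. -/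
def dL (p q : Heis) : ℝ := kGauge (Hmul (Hinv p) q)

/-- The right-invariant gauge metric `d_R(p,q) = |p·q⁻¹|_G`. -/
def dR (p q : Heis) : ℝ := kGauge (Hmul p (Hinv q))

def cg (p : Heis) : ℂ := ⟨p.1 ^ 2 + p.2.1 ^ 2, 4 * p.2.2⟩
def zeta (p : Heis) : ℂ := ⟨p.1, p.2.1⟩

lemma base_nonneg (p : Heis) : 0 ≤ (p.1 ^ 2 + p.2.1 ^ 2) ^ 2 + 16 * p.2.2 ^ 2 := by positivity

lemma kGauge_nonneg (p : Heis) : 0 ≤ kGauge p := Real.rpow_nonneg (base_nonneg p) _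

lemma kGauge_eq_sqrt_abs (p : Heis) : kGauge p = Real.sqrt (‖cg p‖) := by
  have h : ‖cg p‖ =
      ((p.1 ^ 2 + p.2.1 ^ 2) ^ 2 + 16 * p.2.2 ^ 2) ^ ((1:ℝ)/2) := by
    rw [Complex.norm_def, Real.sqrt_eq_rpow]
    congr 1
    simp [Complex.normSq_apply, cg]; ring
  rw [kGauge, h, Real.sqrt_eq_rpow, ← Real.rpow_mul (base_nonneg p)]
  norm_num

lemma kGauge_sq (p : Heis) : kGauge p ^ 2 = ‖cg p‖ := by
  rw [kGauge_eq_sqrt_abs, Real.sq_sqrt (norm_nonneg _)]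

lemma zeta_abs_le (p : Heis) : ‖zeta p‖ ≤ kGauge p := by
  have h1 : ‖zeta p‖ = Real.sqrt (p.1 ^ 2 + p.2.1 ^ 2) := by
    rw [Complex.norm_def]; congr 1; simp [Complex.normSq_apply, zeta]; ring
  rw [h1, kGauge_eq_sqrt_abs]
  apply Real.sqrt_le_sqrt
  calc p.1 ^ 2 + p.2.1 ^ 2 = Real.sqrt ((p.1 ^ 2 + p.2.1 ^ 2) ^ 2) := by
        rw [Real.sqrt_sq (by positivity)]
    _ ≤ ‖cg p‖ := by
        rw [Complex.norm_def, Complex.normSq_apply]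
        apply Real.sqrt_le_sqrt
        simp only [cg]
        nlinarith [sq_nonneg (4 * p.2.2)]

lemma cg_mul (p q : Heis) :
    cg (Hmul p q) = cg p + cg q + 2 * ((starRingEnd ℂ) (zeta p) * zeta q) := by
  apply Complex.ext <;> simp [cg, zeta, Hmul] <;> ring

lemma kGauge_triangle (p q : Heis) : kGauge (Hmul p q) ≤ kGauge p + kGauge q := by
  have h2 : kGauge (Hmul p q) ^ 2 ≤ (kGauge p + kGauge q) ^ 2 := by
    rw [kGauge_sq, cg_mul]
    calc ‖cg p + cg q + 2 * ((starRingEnd ℂ) (zeta p) * zeta q)‖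
        ≤ ‖cg p‖ + ‖cg q‖ +
          ‖2 * ((starRingEnd ℂ) (zeta p) * zeta q)‖ :=
          le_trans (norm_add_le _ _)
            (by gcongr; exact norm_add_le _ _)
      _ = ‖cg p‖ + ‖cg q‖
          + 2 * (‖zeta p‖ * ‖zeta q‖) := by
          rw [norm_mul, norm_mul, Complex.norm_conj]; norm_num
      _ ≤ kGauge p ^ 2 + kGauge q ^ 2 + 2 * (kGauge p * kGauge q) := by
          rw [kGauge_sq, kGauge_sq]
          have := mul_le_mul (zeta_abs_le p) (zeta_abs_le q)
            (norm_nonneg _) (kGauge_nonneg p)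
          linarith
      _ = (kGauge p + kGauge q) ^ 2 := by ring
  have h3 := Real.sqrt_le_sqrt h2
  rwa [Real.sqrt_sq (kGauge_nonneg _),
    Real.sqrt_sq (add_nonneg (kGauge_nonneg p) (kGauge_nonneg q))] at h3

lemma hmul_cancel (p q r : Heis) : Hmul (Hmul p (Hinv q)) (Hmul q r) = Hmul p r := by
  simp only [Hmul, Hinv, Prod.mk.injEq]
  refine ⟨by ring, by ring, by ring⟩

lemma dR_symm (p q : Heis) : dR p q = dR q p := by
  simp only [dR, kGauge, Hmul, Hinv]
  congr 1
  ring

/-- For fixed `t > 0`, the function `w(p) = |p·(t,t,0)|_G` is 1-Lipschitz with respect to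
`d_R` but not Lipschitz with respect to `d_L`. -/
theorem translated_gauge_lipschitz_dR_not_dL :
    ∀ t : ℝ, 0 < t →
      (∀ p q : Heis,
        |kGauge (Hmul p (t, t, 0)) - kGauge (Hmul q (t, t, 0))| ≤ dR p q) ∧
      ¬ ∃ L : ℝ, 0 < L ∧ ∀ p q : Heis,
          |kGauge (Hmul p (t, t, 0)) - kGauge (Hmul q (t, t, 0))| ≤ L * dL p q := by
  intro t ht
  constructor
  · intro p q
    rw [abs_sub_le_iff]
    constructor
    · have h := kGauge_triangle (Hmul p (Hinv q)) (Hmul q (t,t,0))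
      rw [hmul_cancel] at h
      rw [dR]; linarith
    · have h := kGauge_triangle (Hmul q (Hinv p)) (Hmul p (t,t,0))
      rw [hmul_cancel] at h
      rw [dR_symm, dR]; linarith
  · rintro ⟨L, hL, hf⟩
    set ε : ℝ := t / L ^ 2 with hεdef
    have hε : 0 < ε := by positivity
    have key := hf (-t - ε, -t + ε, -(ε * t)) (-t, -t, 0)
    have h1 : Hmul ((-t - ε, -t + ε, -(ε * t)) : Heis) (t, t, 0)
        = (-ε, ε, -(2 * ε * t)) := by
      simp only [Hmul, Prod.mk.injEq]
      refine ⟨by ring, by ring, by ring⟩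
    have h2 : Hmul ((-t, -t, 0) : Heis) (t, t, 0) = ((0 : ℝ), (0:ℝ), (0:ℝ)) := by
      simp only [Hmul, Prod.mk.injEq]
      refine ⟨by ring, by ring, by ring⟩
    have h3 : Hmul (Hinv (-t - ε, -t + ε, -(ε * t))) ((-t, -t, 0) : Heis)
        = (ε, -ε, 0) := by
      simp only [Hmul, Hinv, Prod.mk.injEq]
      refine ⟨by ring, by ring, by ring⟩
    rw [h1, h2, dL, h3] at key
    have hz : kGauge ((0 : ℝ), (0:ℝ), (0:ℝ)) = 0 := by
      simp [kGauge]
    have hdl : kGauge ((ε, -ε, 0) : Heis) = Real.sqrt 2 * ε := by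
      have h2' : Real.sqrt 2 ^ 2 = 2 := Real.sq_sqrt (by norm_num)
      have hb : ((ε ^ 2 + (-ε) ^ 2) ^ 2 + 16 * (0:ℝ) ^ 2)
          = (Real.sqrt 2 * ε) ^ (4:ℕ) := by
        have h4 : (Real.sqrt 2 * ε) ^ (4:ℕ) = (Real.sqrt 2 ^ 2) ^ 2 * ε ^ 4 := by ring
        rw [h4, h2']; ring
      rw [kGauge]
      simp only []
      rw [show ((1:ℝ)/4) = ((4:ℕ):ℝ)⁻¹ by norm_num, hb,
        Real.pow_rpow_inv_natCast (by positivity) (by norm_num)]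
    have hlow : Real.sqrt (8 * ε * t) ≤ kGauge ((-ε, ε, -(2*ε*t)) : Heis) := by
      have hs : Real.sqrt (8 * ε * t) = ((8*ε*t) ^ (2:ℕ)) ^ ((1:ℝ)/4) := by
        rw [← Real.rpow_natCast (8*ε*t) 2, ← Real.rpow_mul (by positivity),
          Real.sqrt_eq_rpow]
        norm_num
      rw [hs, kGauge]
      apply Real.rpow_le_rpow (by positivity) _ (by norm_num)
      simp only []
      nlinarith [sq_nonneg (ε^2)]
    rw [hz, sub_zero, hdl, abs_of_nonneg (kGauge_nonneg _)] at key
    have hsq := le_trans hlow key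
    rw [Real.sqrt_le_iff] at hsq
    obtain ⟨-, hsq1⟩ := hsq
    have h2' : Real.sqrt 2 ^ 2 = 2 := Real.sq_sqrt (by norm_num)
    have hL2 : (0:ℝ) < L ^ 2 := by positivity
    rw [hεdef] at hsq1
    have hexp : (L * (Real.sqrt 2 * (t / L ^ 2))) ^ 2 = 2 * t ^ 2 / L ^ 2 := by
      rw [show (L * (Real.sqrt 2 * (t / L ^ 2))) ^ 2
          = Real.sqrt 2 ^ 2 * (L * (t / L ^ 2)) ^ 2 from by ring, h2']
      field_simp
    rw [hexp, show 8 * (t / L ^ 2) * t = 8 * t ^ 2 / L ^ 2 from by ring,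
      div_le_div_iff₀ hL2 hL2] at hsq1
    nlinarith [mul_pos ht ht]
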